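/- Let S be an uncountable set and for each s ∈ S let G_s be a nontrivial topological group with identity e_s. Then the subgroup G₀ = {(x_s) ∈ ∏_s G_s : x_s ≠ e_s for at most countably many s} of G = ∏_s G_s is G_δ-dense in G: G₀ meets every nonempty G_δ-subset of G. -/

import Mathlib

/-- For an uncountable index set `S` and nontrivial topological groups
`G_s`, the subgroup of the product `∏_s G_s` consisting of all elements with at most
countably many nonidentity coordinates is `G_δ`-dense: it meets every nonempty
`G_δ`-subset of the product. -/
theorem stmt14 {S : Type*} [Uncountable S] (G : S → Type*) [∀ s, Group (G s)]
    [∀ s, TopologicalSpace (G s)] [∀ s, IsTopologicalGroup (G s)]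
    [∀ s, Nontrivial (G s)]
    (f : ℕ → Set (∀ s, G s)) (hf : ∀ n, IsOpen (f n))
    (hne : (⋂ n, f n).Nonempty) :
    ∃ x ∈ ⋂ n, f n, {s | x s ≠ 1}.Countable := by
  obtain ⟨y, hy⟩ := hne
  have h : ∀ n, ∃ (I : Finset S) (u : ∀ s, Set (G s)),
      (∀ a ∈ I, IsOpen (u a) ∧ y a ∈ u a) ∧ (I : Set S).pi u ⊆ f n := by
    intro n
    exact (isOpen_pi_iff.mp (hf n)) y (Set.mem_iInter.mp hy n)
  choose I u hu hsub using h
  classical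
  set T : Set S := ⋃ n, (I n : Set S) with hT
  refine ⟨fun s => if s ∈ T then y s else 1, ?_, ?_⟩
  · refine Set.mem_iInter.mpr fun n => hsub n fun a ha => ?_
    have : a ∈ T := Set.mem_iUnion.mpr ⟨n, ha⟩
    rw [if_pos this]
    exact (hu n a ha).2
  · refine Set.Countable.mono ?_ (Set.countable_iUnion fun n => (I n).countable_toSet)
    intro s hs
    by_contra hsT
    exact hs (if_neg hsT)
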